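/- Let G be a connected simple graph on vertex set V₁ with n₁ = |V₁| vertices admitting a nonnegative curvature vector w₁, and let H be a connected simple graph on vertex set V₂ with n₂ = |V₂| vertices admitting a nonnegative curvature vector w₂. Then the Cartesian (box) product G □ H on V₁ × V₂ admits a nonnegative curvature vector; explicitly, the vector w(g,h) = (‖w₁‖₁/n₁ + ‖w₂‖₁/n₂)^{-1} · w₁(g)·w₂(h) satisfies ∑_{(g₂,h₂)∈V₁×V₂} d_{G□H}((g₁,h₁),(g₂,h₂))·w(g₂,h₂) = n₁·n₂ for every (g₁,h₁) ∈ V₁×V₂, and w is nonnegative. -/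

import Mathlib

open SimpleGraph Finset

private lemma boxProd_walk_length_lb {V₁ V₂ : Type*} {G : SimpleGraph V₁} {H : SimpleGraph V₂}
    (hG : G.Connected) (hH : H.Connected) {x y : V₁ × V₂} (p : (G.boxProd H).Walk x y) :
    G.dist x.1 y.1 + H.dist x.2 y.2 ≤ p.length := by
  induction p with
  | nil => simp
  | @cons x z y h q ih =>
    rcases h with ⟨hA, he⟩ | ⟨hA, he⟩
    · have h1 : G.dist x.1 z.1 ≤ 1 := by simpa using SimpleGraph.dist_le hA.toWalk
      have h2 : G.dist x.1 y.1 ≤ G.dist x.1 z.1 + G.dist z.1 y.1 := hG.dist_triangle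
      have h3 : H.dist x.2 y.2 = H.dist z.2 y.2 := by rw [he]
      change G.dist x.1 y.1 + H.dist x.2 y.2 ≤ q.length + 1
      omega
    · have h1 : H.dist x.2 z.2 ≤ 1 := by simpa using SimpleGraph.dist_le hA.toWalk
      have h2 : H.dist x.2 y.2 ≤ H.dist x.2 z.2 + H.dist z.2 y.2 := hH.dist_triangle
      have h3 : G.dist x.1 y.1 = G.dist z.1 y.1 := by rw [he]
      change G.dist x.1 y.1 + H.dist x.2 y.2 ≤ q.length + 1
      omega

private lemma boxProd_dist_eq {V₁ V₂ : Type*} {G : SimpleGraph V₁} {H : SimpleGraph V₂}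
    (hG : G.Connected) (hH : H.Connected) (x y : V₁ × V₂) :
    (G.boxProd H).dist x y = G.dist x.1 y.1 + H.dist x.2 y.2 := by
  apply le_antisymm
  · obtain ⟨p, hp⟩ := hG.exists_walk_length_eq_dist x.1 y.1
    obtain ⟨q, hq⟩ := hH.exists_walk_length_eq_dist x.2 y.2
    have hd := SimpleGraph.dist_le ((p.boxProdLeft H x.2).append (q.boxProdRight G y.1))
    have hl1 : (p.boxProdLeft H x.2).length = p.length := SimpleGraph.Walk.length_map _ _
    have hl2 : (q.boxProdRight G y.1).length = q.length := SimpleGraph.Walk.length_map _ _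
    rw [SimpleGraph.Walk.length_append, hl1, hl2] at hd
    simpa [SimpleGraph.Walk.boxProdLeft, SimpleGraph.Walk.boxProdRight, hp, hq] using hd
  · obtain ⟨r, hr⟩ := ((hG.boxProd hH) x y).exists_walk_length_eq_dist
    rw [← hr]
    exact boxProd_walk_length_lb hG hH r

/-- Products of nonnegatively curved graphs are nonnegatively curved: if `w₁, w₂` are
nonnegative curvature vectors for connected graphs `G, H`, then
`w(g,h) = (‖w₁‖₁/n₁ + ‖w₂‖₁/n₂)⁻¹ · w₁(g) w₂(h)` is a nonnegative curvature vector
for the box product `G □ H`. -/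
theorem boxProd_nonneg_curvature {V₁ V₂ : Type*} [Fintype V₁] [Fintype V₂]
    (G : SimpleGraph V₁) (H : SimpleGraph V₂)
    (hG : G.Connected) (hH : H.Connected)
    (w₁ : V₁ → ℝ) (hw₁0 : ∀ v, 0 ≤ w₁ v)
    (hw₁ : ∀ u : V₁, ∑ v : V₁, (G.dist u v : ℝ) * w₁ v = (Fintype.card V₁ : ℝ))
    (w₂ : V₂ → ℝ) (hw₂0 : ∀ v, 0 ≤ w₂ v)
    (hw₂ : ∀ u : V₂, ∑ v : V₂, (H.dist u v : ℝ) * w₂ v = (Fintype.card V₂ : ℝ)) :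
    (∀ p : V₁ × V₂,
      0 ≤ ((∑ v : V₁, w₁ v) / (Fintype.card V₁ : ℝ) +
            (∑ v : V₂, w₂ v) / (Fintype.card V₂ : ℝ))⁻¹ * (w₁ p.1 * w₂ p.2)) ∧
    (∀ p : V₁ × V₂,
      ∑ q : V₁ × V₂, ((G.boxProd H).dist p q : ℝ) *
          (((∑ v : V₁, w₁ v) / (Fintype.card V₁ : ℝ) +
            (∑ v : V₂, w₂ v) / (Fintype.card V₂ : ℝ))⁻¹ * (w₁ q.1 * w₂ q.2)) =
        (Fintype.card V₁ : ℝ) * (Fintype.card V₂ : ℝ)) := by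
  have hne₁ : Nonempty V₁ := hG.nonempty
  have hne₂ : Nonempty V₂ := hH.nonempty
  have hn₁ : (0 : ℝ) < (Fintype.card V₁ : ℝ) := by exact_mod_cast Fintype.card_pos
  have hn₂ : (0 : ℝ) < (Fintype.card V₂ : ℝ) := by exact_mod_cast Fintype.card_pos
  set n₁ : ℝ := (Fintype.card V₁ : ℝ)
  set n₂ : ℝ := (Fintype.card V₂ : ℝ)
  set S₁ : ℝ := ∑ v : V₁, w₁ v with hS₁
  set S₂ : ℝ := ∑ v : V₂, w₂ v with hS₂
  have hS₁pos : 0 < S₁ := by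
    by_contra hle
    push_neg at hle
    have hz : ∀ v, w₁ v = 0 := by
      intro v
      have h0 : S₁ = 0 := le_antisymm hle (Finset.sum_nonneg fun v _ => hw₁0 v)
      exact (Finset.sum_eq_zero_iff_of_nonneg (fun v _ => hw₁0 v)).mp h0 v (Finset.mem_univ v)
    have := hw₁ (Classical.arbitrary V₁)
    simp [hz] at this
    exact absurd this.symm (ne_of_gt hn₁)
  have hS₂pos : 0 < S₂ := by
    by_contra hle
    push_neg at hle
    have hz : ∀ v, w₂ v = 0 := by
      intro v
      have h0 : S₂ = 0 := le_antisymm hle (Finset.sum_nonneg fun v _ => hw₂0 v)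
      exact (Finset.sum_eq_zero_iff_of_nonneg (fun v _ => hw₂0 v)).mp h0 v (Finset.mem_univ v)
    have := hw₂ (Classical.arbitrary V₂)
    simp [hz] at this
    exact absurd this.symm (ne_of_gt hn₂)
  set c : ℝ := S₁ / n₁ + S₂ / n₂ with hc
  have hcpos : 0 < c := by positivity
  constructor
  · intro p
    have := hw₁0 p.1
    have := hw₂0 p.2
    positivity
  · intro p
    have key : ∑ q : V₁ × V₂, ((G.boxProd H).dist p q : ℝ) * (c⁻¹ * (w₁ q.1 * w₂ q.2))
        = c⁻¹ * (n₁ * S₂ + S₁ * n₂) := by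
      rw [Fintype.sum_prod_type]
      have hterm : ∀ a : V₁, ∀ b : V₂,
          ((G.boxProd H).dist p (a, b) : ℝ) * (c⁻¹ * (w₁ a * w₂ b))
          = c⁻¹ * (((G.dist p.1 a : ℝ) * w₁ a) * w₂ b + w₁ a * ((H.dist p.2 b : ℝ) * w₂ b)) := by
        intro a b
        rw [boxProd_dist_eq hG hH]
        push_cast
        ring
      simp_rw [hterm, ← Finset.mul_sum]
      congr 1
      calc ∑ a, ∑ b, (((G.dist p.1 a : ℝ) * w₁ a) * w₂ b + w₁ a * ((H.dist p.2 b : ℝ) * w₂ b))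
          = ∑ a, (((G.dist p.1 a : ℝ) * w₁ a) * S₂ + w₁ a * n₂) := by
            refine Finset.sum_congr rfl fun a _ => ?_
            rw [Finset.sum_add_distrib, ← Finset.mul_sum, ← Finset.mul_sum, hw₂ p.2, ← hS₂]
        _ = n₁ * S₂ + S₁ * n₂ := by
            rw [Finset.sum_add_distrib, ← Finset.sum_mul, ← Finset.sum_mul, hw₁ p.1, ← hS₁]
    rw [key]
    have hX : n₁ * S₂ + S₁ * n₂ = c * (n₁ * n₂) := by
      rw [hc]
      field_simp
      ring
    rw [hX, ← mul_assoc, inv_mul_cancel₀ (ne_of_gt hcpos), one_mul]
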